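/- Fix r ≥ 1 and let M be the (r+1)×(r+1) real matrix with entries M_{i,j} = 1/((r − i + j)!) for i, j ∈ {0,…,r} (so row i is (1/(r−i)!, 1/(r−i+1)!, …, 1/(2r−i)!)). Then M is invertible, and the (0, r) entry of M⁻¹ equals (−1)^r. Consequently, if M x = y, then x_0 = (−1)^r y_r + Σ_{i<r} a_i y_i where the constants a_i = (M⁻¹)_{0,i} depend only on r. -/

import Mathlib

open Finset Matrix

private lemma alt_sum_choose_real (m : ℕ) :
    ∑ t ∈ Finset.range (m + 1), (-1 : ℝ) ^ t * (m.choose t : ℝ) = if m = 0 then 1 else 0 := by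
  have h := Int.alternating_sum_range_choose (n := m)
  calc ∑ t ∈ Finset.range (m + 1), (-1 : ℝ) ^ t * (m.choose t : ℝ)
      = ((∑ i ∈ Finset.range (m + 1), (-1 : ℤ) ^ i * (m.choose i : ℤ) : ℤ) : ℝ) := by
        push_cast; ring
    _ = _ := by rw [h]; split <;> norm_num

private lemma pascal_orth (n k : ℕ) (hk : k ≤ n) :
    ∑ j ∈ Finset.range (n + 1), (-1 : ℝ) ^ (n - j) * (n.choose j : ℝ) * (j.choose k : ℝ)
      = if k = n then 1 else 0 := by
  have hsub : ∑ j ∈ Finset.Ico k (n + 1), (-1 : ℝ) ^ (n - j) * (n.choose j : ℝ) * (j.choose k : ℝ)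
      = ∑ j ∈ Finset.range (n + 1), (-1 : ℝ) ^ (n - j) * (n.choose j : ℝ) * (j.choose k : ℝ) := by
    apply Finset.sum_subset
    · intro x hx
      simp only [Finset.mem_Ico, Finset.mem_range] at hx ⊢
      omega
    · intro x hx hnx
      simp only [Finset.mem_Ico, Finset.mem_range] at hx hnx
      have hxk : x < k := by omega
      rw [Nat.choose_eq_zero_of_lt hxk]
      simp
  rw [← hsub, Finset.sum_Ico_eq_sum_range]
  have hm : n + 1 - k = (n - k) + 1 := by omega
  rw [hm]
  have hneg : ∀ t : ℕ, ((-1 : ℝ) ^ t) * ((-1 : ℝ) ^ t) = 1 := by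
    intro t
    rw [← pow_add, ← two_mul, pow_mul]
    norm_num
  have hterm : ∀ t ∈ Finset.range (n - k + 1),
      (-1 : ℝ) ^ (n - (k + t)) * (n.choose (k + t) : ℝ) * ((k + t).choose k : ℝ)
      = (n.choose k : ℝ) * ((-1 : ℝ) ^ (n - k) * ((-1 : ℝ) ^ t * ((n - k).choose t : ℝ))) := by
    intro t ht
    simp only [Finset.mem_range] at ht
    have h1 : n.choose (k + t) * (k + t).choose k = n.choose k * (n - k).choose t := by
      have := Nat.choose_mul (n := n) (k := k + t) (s := k) (by omega)
      simpa using this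
    have h2 : (-1 : ℝ) ^ (n - (k + t)) = (-1 : ℝ) ^ (n - k) * (-1 : ℝ) ^ t := by
      have e : n - (k + t) + t = n - k := by omega
      calc (-1 : ℝ) ^ (n - (k + t))
          = (-1 : ℝ) ^ (n - (k + t)) * ((-1 : ℝ) ^ t * (-1 : ℝ) ^ t) := by rw [hneg]; ring
        _ = ((-1 : ℝ) ^ (n - (k + t)) * (-1 : ℝ) ^ t) * (-1 : ℝ) ^ t := by ring
        _ = (-1 : ℝ) ^ (n - k) * (-1 : ℝ) ^ t := by rw [← pow_add, e]
    have h1R : (n.choose (k + t) : ℝ) * ((k + t).choose k : ℝ)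
        = (n.choose k : ℝ) * ((n - k).choose t : ℝ) := by exact_mod_cast congrArg Nat.cast h1
    rw [h2]
    linear_combination ((-1 : ℝ) ^ (n - k) * (-1 : ℝ) ^ t) * h1R
  rw [Finset.sum_congr rfl hterm, ← Finset.mul_sum, ← Finset.mul_sum,
    alt_sum_choose_real (n - k)]
  by_cases hkn : k = n
  · subst hkn
    simp
  · have : n - k ≠ 0 := by omega
    simp [this, hkn]

private lemma choose_sum_fin (r : ℕ) (i j : Fin (r + 1)) :
    ∑ k : Fin (r + 1),
        (if (k : ℕ) ≤ (i : ℕ) then (r.choose ((i : ℕ) - (k : ℕ)) : ℝ) else 0) * ((j : ℕ).choose (k : ℕ) : ℝ)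
      = ((r + (j : ℕ)).choose (i : ℕ) : ℝ) := by
  rw [Fin.sum_univ_eq_sum_range
    (fun k => (if k ≤ (i : ℕ) then (r.choose ((i : ℕ) - k) : ℝ) else 0) * ((j : ℕ).choose k : ℝ))]
  have hsub : ∑ k ∈ Finset.range ((i : ℕ) + 1),
      (if k ≤ (i : ℕ) then (r.choose ((i : ℕ) - k) : ℝ) else 0) * ((j : ℕ).choose k : ℝ)
      = ∑ k ∈ Finset.range (r + 1),
      (if k ≤ (i : ℕ) then (r.choose ((i : ℕ) - k) : ℝ) else 0) * ((j : ℕ).choose k : ℝ) := by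
    apply Finset.sum_subset
    · apply Finset.range_subset_range.mpr
      have := i.isLt; omega
    · intro x hx hnx
      simp only [Finset.mem_range] at hx hnx
      rw [if_neg (by omega)]
      ring
  rw [← hsub]
  have key : ∑ k ∈ Finset.range ((i : ℕ) + 1), r.choose ((i : ℕ) - k) * (j : ℕ).choose k
      = (r + (j : ℕ)).choose (i : ℕ) := by
    rw [Nat.add_choose_eq,
      Finset.Nat.sum_antidiagonal_eq_sum_range_succ (fun a b => r.choose a * (j : ℕ).choose b),
      ← Finset.sum_range_reflect]
    apply Finset.sum_congr rfl
    intro k hk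
    simp only [Finset.mem_range] at hk
    congr 2 <;> omega
  calc ∑ k ∈ Finset.range ((i : ℕ) + 1),
      (if k ≤ (i : ℕ) then (r.choose ((i : ℕ) - k) : ℝ) else 0) * ((j : ℕ).choose k : ℝ)
      = ∑ k ∈ Finset.range ((i : ℕ) + 1), ((r.choose ((i : ℕ) - k) * (j : ℕ).choose k : ℕ) : ℝ) := by
        apply Finset.sum_congr rfl
        intro k hk
        simp only [Finset.mem_range] at hk
        rw [if_pos (by omega)]
        push_cast; ring
    _ = _ := by rw [← Nat.cast_sum, key]

/-- **Proposition 6.2: the factorial-coefficient matrix.**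
For `r ≥ 1`, the matrix `M` with `M i j = 1/((r − i + j)!)` (indices `0,…,r`) is invertible,
the `(0, r)` entry of `M⁻¹` is `(−1)^r`, and consequently, whenever `M x = y`,
`x₀ = (−1)^r yᵣ + Σ_{i<r} aᵢ yᵢ` where `aᵢ = (M⁻¹)₍₀,ᵢ₎` depend only on `r`. -/
theorem factorial_matrix_inverse_entry (r : ℕ) (hr : 1 ≤ r)
    (M : Matrix (Fin (r + 1)) (Fin (r + 1)) ℝ)
    (hM : M = Matrix.of fun (i j : Fin (r + 1)) => (1 : ℝ) / Nat.factorial (r - (i : ℕ) + (j : ℕ))) :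
    IsUnit M
    ∧ M⁻¹ 0 (Fin.last r) = (-1 : ℝ) ^ r
    ∧ ∀ x y : Fin (r + 1) → ℝ, M.mulVec x = y →
        x 0 = (-1 : ℝ) ^ r * y (Fin.last r)
          + ∑ i ∈ Finset.univ.filter fun i : Fin (r + 1) => (i : ℕ) < r,
              M⁻¹ 0 i * y i := by
  classical
  set L : Matrix (Fin (r + 1)) (Fin (r + 1)) ℝ :=
    Matrix.diagonal (fun i : Fin (r + 1) => ((i : ℕ).factorial : ℝ)) with hL
  set A : Matrix (Fin (r + 1)) (Fin (r + 1)) ℝ :=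
    Matrix.of (fun i k : Fin (r + 1) =>
      if (k : ℕ) ≤ (i : ℕ) then (r.choose ((i : ℕ) - (k : ℕ)) : ℝ) else 0) with hA
  set B : Matrix (Fin (r + 1)) (Fin (r + 1)) ℝ :=
    Matrix.of (fun k j : Fin (r + 1) => ((j : ℕ).choose (k : ℕ) : ℝ)) with hB
  set D : Matrix (Fin (r + 1)) (Fin (r + 1)) ℝ :=
    Matrix.diagonal (fun j : Fin (r + 1) => ((r + (j : ℕ)).factorial : ℝ)⁻¹) with hD
  have hfne : ∀ n : ℕ, ((n.factorial : ℝ)) ≠ 0 := fun n =>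
    Nat.cast_ne_zero.mpr (Nat.factorial_ne_zero n)
  -- the decomposition
  have hdec : M = L * (A * B) * D := by
    ext i j
    have hile : (i : ℕ) ≤ r := by have := i.isLt; omega
    rw [hM, Matrix.mul_diagonal, Matrix.diagonal_mul]
    have hAB : (A * B) i j = ((r + (j : ℕ)).choose (i : ℕ) : ℝ) := by
      rw [Matrix.mul_apply]
      exact choose_sum_fin r i j
    rw [hAB]
    have hle : (i : ℕ) ≤ r + (j : ℕ) := by omega
    have hfact : (r + (j : ℕ)).choose (i : ℕ) * (i : ℕ).factorial * (r - (i : ℕ) + (j : ℕ)).factorial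
        = (r + (j : ℕ)).factorial := by
      have := Nat.choose_mul_factorial_mul_factorial hle
      have hsub : r + (j : ℕ) - (i : ℕ) = r - (i : ℕ) + (j : ℕ) := by omega
      rw [hsub] at this
      exact this
    have hfactR : (((r + (j : ℕ)).choose (i : ℕ) : ℝ)) * ((i : ℕ).factorial : ℝ)
        * ((r - (i : ℕ) + (j : ℕ)).factorial : ℝ) = ((r + (j : ℕ)).factorial : ℝ) := by
      exact_mod_cast congrArg (Nat.cast : ℕ → ℝ) hfact
    simp only [Matrix.of_apply]
    field_simp
    linear_combination -hfactR
  -- determinants of the triangular pieces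
  have hdetA : A.det = 1 := by
    rw [Matrix.det_of_lowerTriangular A ?ht]
    case ht =>
      intro i j hij
      have : (i : ℕ) < (j : ℕ) := hij
      simp only [hA, Matrix.of_apply]
      rw [if_neg (by omega)]
    simp [hA]
  have hdetB : B.det = 1 := by
    rw [Matrix.det_of_upperTriangular ?ht]
    case ht =>
      intro i j hij
      have : (j : ℕ) < (i : ℕ) := hij
      simp only [hB, Matrix.of_apply]
      rw [Nat.choose_eq_zero_of_lt this]
      simp
    simp [hB]
  have hdetM : M.det ≠ 0 := by
    rw [hdec, Matrix.det_mul, Matrix.det_mul, Matrix.det_mul, hdetA, hdetB,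
      hL, hD, Matrix.det_diagonal, Matrix.det_diagonal]
    refine mul_ne_zero (mul_ne_zero (Finset.prod_ne_zero_iff.mpr fun i _ => hfne _) (by norm_num))
      (Finset.prod_ne_zero_iff.mpr fun i _ => inv_ne_zero (hfne _))
  have hunit : IsUnit M := (Matrix.isUnit_iff_isUnit_det M).mpr (isUnit_iff_ne_zero.mpr hdetM)
  have hMinv : M⁻¹ * M = 1 := Matrix.nonsing_inv_mul M (isUnit_iff_ne_zero.mpr hdetM)
  -- the explicit solution of M u = e_last
  set u : Fin (r + 1) → ℝ := fun j =>
    (-1 : ℝ) ^ (r - (j : ℕ)) * (r.choose (j : ℕ) : ℝ) * ((r + (j : ℕ)).factorial : ℝ)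
      / (r.factorial : ℝ) with hu
  have step1 : D.mulVec u = fun j : Fin (r + 1) =>
      (-1 : ℝ) ^ (r - (j : ℕ)) * (r.choose (j : ℕ) : ℝ) / (r.factorial : ℝ) := by
    funext j
    rw [hD, Matrix.mulVec_diagonal, hu]
    field_simp
  have step2 : B.mulVec (fun j : Fin (r + 1) =>
      (-1 : ℝ) ^ (r - (j : ℕ)) * (r.choose (j : ℕ) : ℝ) / (r.factorial : ℝ))
      = Pi.single (Fin.last r) ((r.factorial : ℝ)⁻¹) := by
    funext k
    have hk : (k : ℕ) ≤ r := by have := k.isLt; omega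
    simp only [Matrix.mulVec, dotProduct, hB, Matrix.of_apply]
    have : ∀ j : Fin (r + 1),
        ((j : ℕ).choose (k : ℕ) : ℝ) *
          ((-1 : ℝ) ^ (r - (j : ℕ)) * (r.choose (j : ℕ) : ℝ) / (r.factorial : ℝ))
        = ((-1 : ℝ) ^ (r - (j : ℕ)) * (r.choose (j : ℕ) : ℝ) * ((j : ℕ).choose (k : ℕ) : ℝ))
            * (r.factorial : ℝ)⁻¹ := by
      intro j; ring
    rw [Finset.sum_congr rfl fun j _ => this j, ← Finset.sum_mul,
      Fin.sum_univ_eq_sum_range (fun j =>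
        (-1 : ℝ) ^ (r - j) * (r.choose j : ℝ) * ((j : ℕ).choose (k : ℕ) : ℝ)),
      pascal_orth r (k : ℕ) hk]
    by_cases hkr : (k : ℕ) = r
    · have hkl : k = Fin.last r := by
        apply Fin.ext; simp [hkr]
      rw [if_pos hkr, hkl]
      simp
    · have hkl : k ≠ Fin.last r := by
        intro h; apply hkr; rw [h]; simp
      rw [if_neg hkr, Pi.single_eq_of_ne hkl]
      simp
  have step3 : A.mulVec (Pi.single (Fin.last r) ((r.factorial : ℝ)⁻¹))
      = Pi.single (Fin.last r) ((r.factorial : ℝ)⁻¹) := by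
    rw [Matrix.mulVec_single]
    funext i
    simp only [hA, Matrix.of_apply, Fin.val_last, Pi.smul_apply, Matrix.col_apply, op_smul_eq_mul]
    by_cases hi : i = Fin.last r
    · subst hi
      simp [Fin.val_last]
    · have hlt : (i : ℕ) < r := by
        have h1 := i.isLt
        have : (i : ℕ) ≠ r := fun h => hi (Fin.ext (by simp [h]))
        omega
      rw [if_neg (by omega), Pi.single_eq_of_ne hi]
      ring
  have step4 : L.mulVec (Pi.single (Fin.last r) ((r.factorial : ℝ)⁻¹))
      = Pi.single (Fin.last r) 1 := by
    rw [hL, Matrix.diagonal_mulVec_single]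
    congr 1
    simp only [Fin.val_last]
    rw [mul_inv_cancel₀ (hfne r)]
  have hMu : M.mulVec u = Pi.single (Fin.last r) 1 := by
    rw [hdec, ← Matrix.mulVec_mulVec, ← Matrix.mulVec_mulVec, ← Matrix.mulVec_mulVec,
      step1, step2, step3, step4]
  have huinv : u = M⁻¹.mulVec (Pi.single (Fin.last r) 1) := by
    rw [← hMu, Matrix.mulVec_mulVec, hMinv, Matrix.one_mulVec]
  have hentry : M⁻¹ 0 (Fin.last r) = (-1 : ℝ) ^ r := by
    have h0 : u 0 = (-1 : ℝ) ^ r := by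
      rw [hu]
      simp only [Fin.val_zero, Nat.sub_zero, Nat.choose_zero_right, Nat.add_zero, Nat.cast_one]
      field_simp
    rw [Matrix.mulVec_single] at huinv
    have h1 := congrFun huinv 0
    simp only [Pi.smul_apply, Matrix.col_apply, op_smul_eq_mul] at h1
    rw [h0, mul_one] at h1
    exact h1.symm
  refine ⟨hunit, hentry, ?_⟩
  intro x y hxy
  have hx : x = M⁻¹.mulVec y := by
    rw [← hxy, Matrix.mulVec_mulVec, hMinv, Matrix.one_mulVec]
  have hfe : (Finset.univ.filter fun i : Fin (r + 1) => (i : ℕ) < r)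
      = Finset.univ.erase (Fin.last r) := by
    ext i
    simp only [Finset.mem_filter, Finset.mem_erase, Finset.mem_univ, true_and, and_true]
    constructor
    · intro h hil
      rw [hil] at h; simp at h
    · intro h
      have h1 := i.isLt
      have : (i : ℕ) ≠ r := fun hh => h (Fin.ext (by simp [hh]))
      omega
  have hsplit := Finset.add_sum_erase Finset.univ (fun j => M⁻¹ 0 j * y j)
    (Finset.mem_univ (Fin.last r))
  rw [hx, hfe, ← hentry]
  simp only [Matrix.mulVec, dotProduct]
  rw [← hsplit]
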